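/- Assume the parameter sequences (Λ_n), (μ_n), (p_n), (η_n) are bounded, nonnegative and ω-periodic for some ω ∈ ℕ, and satisfy: there is ω_μ ∈ ℕ with limsup_{n→∞} ∏_{k=n}^{n+ω_μ} 1/(1+μ_k) < 1, and there are ω_Λ, ω_p ∈ ℕ with liminf_{n→∞} Σ_{k=n+1}^{n+ω_Λ} Λ_k > 0 and liminf_{n→∞} Σ_{k=n+1}^{n+ω_p} p_k > 0. Then the auxiliary system has a unique positive ω-periodic solution (x*_n, y*_n), and this solution is globally attractive: every solution (x_n, y_n) of the auxiliary system with x_0 ≥ 0, y_0 ≥ 0 satisfies x_n − x*_n → 0 and y_n − y*_n → 0 as n → ∞. -/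

import Mathlib

open Filter

def AuxSys (Lam μ p η : ℕ → ℝ) (x y : ℕ → ℝ) : Prop :=
  ∀ n : ℕ,
    x (n+1) = (Lam n + η n * y (n+1) + x n) / (1 + μ n + p n) ∧
    y (n+1) = (p n * x (n+1) + y n) / (1 + μ n + η n)

def BddNonneg (u : ℕ → ℝ) : Prop := (∀ n, 0 ≤ u n) ∧ ∃ C : ℝ, ∀ n, u n ≤ C

namespace S19

variable (Lam μ p η : ℕ → ℝ)

noncomputable def stepP (n : ℕ) (z : ℝ × ℝ) : ℝ × ℝ :=
  (((1 + μ n + η n) * (Lam n + z.1) + η n * z.2) / ((1 + μ n) * (1 + μ n + η n + p n)),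
   (p n * (Lam n + z.1) + (1 + μ n + p n) * z.2) / ((1 + μ n) * (1 + μ n + η n + p n)))

noncomputable def solP (z : ℝ × ℝ) : ℕ → ℝ × ℝ
  | 0 => z
  | n+1 => stepP Lam μ p η n (solP z n)

def d1 (w w' : ℝ × ℝ) : ℝ := |w.1 - w'.1| + |w.2 - w'.2|

lemma abs_comb {a b x y : ℝ} (ha : 0 ≤ a) (hb : 0 ≤ b) : |a*x + b*y| ≤ a*|x| + b*|y| := by
  calc |a*x+b*y| ≤ |a*x| + |b*y| := abs_add_le _ _
  _ = a*|x| + b*|y| := by rw [abs_mul, abs_mul, abs_of_nonneg ha, abs_of_nonneg hb]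


variable {Lam μ p η}
variable (hL : ∀ n, 0 ≤ Lam n) (hm : ∀ n, 0 ≤ μ n) (hq : ∀ n, 0 ≤ p n) (he : ∀ n, 0 ≤ η n)

section
include hm hq he

lemma Dpos (n : ℕ) : 0 < (1 + μ n) * (1 + μ n + η n + p n) := by
  have := hm n; have := hq n; have := he n; positivity

lemma step_spec (n : ℕ) (z : ℝ × ℝ) :
    (stepP Lam μ p η n z).1
      = (Lam n + η n * (stepP Lam μ p η n z).2 + z.1) / (1 + μ n + p n) ∧
    (stepP Lam μ p η n z).2
      = (p n * (stepP Lam μ p η n z).1 + z.2) / (1 + μ n + η n) := by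
  have hD := Dpos hm hq he n
  have hA : (0:ℝ) < 1 + μ n + p n := by have := hm n; have := hq n; linarith
  have hB : (0:ℝ) < 1 + μ n + η n := by have := hm n; have := he n; linarith
  constructor <;>
  · simp only [stepP]
    rw [eq_div_iff (by linarith)]
    have h1 : (1 + μ n) ≠ 0 := by have := hm n; positivity
    have h2 : (1 + μ n + η n + p n) ≠ 0 := by have := hm n; have := hq n; have := he n; positivity
    field_simp
    ring

/-- any AuxSys solution is given by solP from its initial data -/
lemma aux_eq_sol {x y : ℕ → ℝ} (hxy : AuxSys Lam μ p η x y) (n : ℕ) :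
    (x n, y n) = solP Lam μ p η (x 0, y 0) n := by
  induction n with
  | zero => rfl
  | succ n ih =>
    have hD := Dpos hm hq he n
    have hA : (0:ℝ) < 1 + μ n + p n := by have := hm n; have := hq n; linarith
    have hB : (0:ℝ) < 1 + μ n + η n := by have := hm n; have := he n; linarith
    obtain ⟨e1, e2⟩ := hxy n
    have e1' : x (n+1) * (1 + μ n + p n) = Lam n + η n * y (n+1) + x n := by
      rw [e1]; field_simp
    have e2' : y (n+1) * (1 + μ n + η n) = p n * x (n+1) + y n := by
      rw [e2]; field_simp
    have hx : x (n+1) = ((1 + μ n + η n) * (Lam n + x n) + η n * y n)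
        / ((1 + μ n) * (1 + μ n + η n + p n)) := by
      rw [eq_div_iff (ne_of_gt hD)]
      linear_combination (1 + μ n + η n) * e1' + η n * e2'
    have hy : y (n+1) = (p n * (Lam n + x n) + (1 + μ n + p n) * y n)
        / ((1 + μ n) * (1 + μ n + η n + p n)) := by
      rw [eq_div_iff (ne_of_gt hD)]
      linear_combination p n * e1' + (1 + μ n + p n) * e2'
    rw [solP, ← ih]
    simp only [stepP]
    exact Prod.ext hx hy

/-- solP gives an AuxSys solution -/
lemma sol_aux (z : ℝ × ℝ) :
    AuxSys Lam μ p η (fun n => (solP Lam μ p η z n).1) (fun n => (solP Lam μ p η z n).2) := by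
  intro n
  have h := step_spec (Lam := Lam) hm hq he n (solP Lam μ p η z n)
  dsimp only
  rw [solP]
  exact h

lemma step_contract (n : ℕ) (z z' : ℝ × ℝ) :
    d1 (stepP Lam μ p η n z) (stepP Lam μ p η n z') ≤ d1 z z' / (1 + μ n) := by
  have hD := Dpos hm hq he n
  have hm' := hm n; have hq' := hq n; have he' := he n
  have h1 : (stepP Lam μ p η n z).1 - (stepP Lam μ p η n z').1
      = ((1 + μ n + η n) * (z.1 - z'.1) + η n * (z.2 - z'.2))
        / ((1 + μ n) * (1 + μ n + η n + p n)) := by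
    simp only [stepP]
    rw [div_sub_div_same]; ring_nf
  have h2 : (stepP Lam μ p η n z).2 - (stepP Lam μ p η n z').2
      = (p n * (z.1 - z'.1) + (1 + μ n + p n) * (z.2 - z'.2))
        / ((1 + μ n) * (1 + μ n + η n + p n)) := by
    simp only [stepP]
    rw [div_sub_div_same]; ring_nf
  have hb1 := abs_comb (x := z.1 - z'.1) (y := z.2 - z'.2)
    (a := 1 + μ n + η n) (b := η n) (by linarith) he'
  have hb2 := abs_comb (x := z.1 - z'.1) (y := z.2 - z'.2)
    (a := p n) (b := 1 + μ n + p n) hq' (by linarith)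
  have hS : (1 + μ n + η n + p n) ≠ 0 := by linarith
  unfold d1
  rw [h1, h2, abs_div, abs_div, abs_of_nonneg hD.le, ← add_div]
  calc (|(1 + μ n + η n) * (z.1 - z'.1) + η n * (z.2 - z'.2)|
        + |p n * (z.1 - z'.1) + (1 + μ n + p n) * (z.2 - z'.2)|)
        / ((1 + μ n) * (1 + μ n + η n + p n))
      ≤ ((1 + μ n + η n + p n) * (|z.1 - z'.1| + |z.2 - z'.2|))
        / ((1 + μ n) * (1 + μ n + η n + p n)) := by
        gcongr
        linarith [hb1, hb2]
    _ = (|z.1 - z'.1| + |z.2 - z'.2|) / (1 + μ n) := by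
        rw [mul_comm (1 + μ n) (1 + μ n + η n + p n), mul_div_mul_left _ _ hS]


omit hm hq he in
lemma d1_nonneg (w w' : ℝ × ℝ) : 0 ≤ d1 w w' := add_nonneg (abs_nonneg _) (abs_nonneg _)

omit hm hq he in
lemma d1_eq_zero {w w' : ℝ × ℝ} (h : d1 w w' ≤ 0) : w = w' := by
  have h1 : |w.1 - w'.1| = 0 := le_antisymm (by have := abs_nonneg (w.2 - w'.2); unfold d1 at h; linarith) (abs_nonneg _)
  have h2 : |w.2 - w'.2| = 0 := le_antisymm (by have := abs_nonneg (w.1 - w'.1); unfold d1 at h; linarith) (abs_nonneg _)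
  have := abs_eq_zero.mp h1
  have := abs_eq_zero.mp h2
  exact Prod.ext (by linarith) (by linarith)

lemma sol_contract (z z' : ℝ × ℝ) (n : ℕ) :
    d1 (solP Lam μ p η z n) (solP Lam μ p η z' n)
      ≤ d1 z z' * ∏ k ∈ Finset.range n, (1 + μ k)⁻¹ := by
  induction n with
  | zero => simp [solP]
  | succ n ih =>
    have hμn : (0:ℝ) < 1 + μ n := by have := hm n; linarith
    calc d1 (solP Lam μ p η z (n+1)) (solP Lam μ p η z' (n+1))
        ≤ d1 (solP Lam μ p η z n) (solP Lam μ p η z' n) / (1 + μ n) := by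
          rw [solP, solP]; exact step_contract hm hq he n _ _
      _ ≤ (d1 z z' * ∏ k ∈ Finset.range n, (1 + μ k)⁻¹) / (1 + μ n) := by gcongr
      _ = d1 z z' * ∏ k ∈ Finset.range (n+1), (1 + μ k)⁻¹ := by
          rw [Finset.prod_range_succ, div_eq_mul_inv, mul_assoc]

lemma step_nonneg (n : ℕ) {z : ℝ × ℝ} (hz1 : 0 ≤ z.1) (hz2 : 0 ≤ z.2)
    (hLn : 0 ≤ Lam n) :
    0 ≤ (stepP Lam μ p η n z).1 ∧ 0 ≤ (stepP Lam μ p η n z).2 := by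
  have hD := Dpos hm hq he n
  have hm' := hm n; have hq' := hq n; have he' := he n
  constructor <;>
  · apply div_nonneg _ hD.le
    · nlinarith

lemma sol_nonneg (hL : ∀ n, 0 ≤ Lam n) {z : ℝ × ℝ} (hz1 : 0 ≤ z.1) (hz2 : 0 ≤ z.2) (n : ℕ) :
    0 ≤ (solP Lam μ p η z n).1 ∧ 0 ≤ (solP Lam μ p η z n).2 := by
  induction n with
  | zero => exact ⟨hz1, hz2⟩
  | succ n ih => rw [solP]; exact step_nonneg hm hq he n ih.1 ih.2 (hL n)

lemma solP_affine (n : ℕ) : ∃ a b c d e f : ℝ, ∀ z : ℝ × ℝ,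
    solP Lam μ p η z n = (a*z.1 + b*z.2 + c, d*z.1 + e*z.2 + f) := by
  induction n with
  | zero => exact ⟨1,0,0,0,1,0, fun z => by simp [solP]⟩
  | succ n ih =>
    obtain ⟨a,b,c,d,e,f,h⟩ := ih
    have hD := (Dpos hm hq he n).ne'
    refine ⟨((1 + μ n + η n)*a + η n*d)/((1 + μ n) * (1 + μ n + η n + p n)),
            ((1 + μ n + η n)*b + η n*e)/((1 + μ n) * (1 + μ n + η n + p n)),
            ((1 + μ n + η n)*(Lam n + c) + η n*f)/((1 + μ n) * (1 + μ n + η n + p n)),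
            (p n*a + (1 + μ n + p n)*d)/((1 + μ n) * (1 + μ n + η n + p n)),
            (p n*b + (1 + μ n + p n)*e)/((1 + μ n) * (1 + μ n + η n + p n)),
            (p n*(Lam n + c) + (1 + μ n + p n)*f)/((1 + μ n) * (1 + μ n + η n + p n)),
            fun z => ?_⟩
    rw [solP, h z]
    simp only [stepP]
    refine Prod.ext ?_ ?_ <;> · dsimp only; field_simp; ring

lemma exists_fixed (ω : ℕ) (r : ℝ) (hr0 : 0 ≤ r) (hr1 : r < 1)
    (hcon : ∀ z z' : ℝ × ℝ,
      d1 (solP Lam μ p η z ω) (solP Lam μ p η z' ω) ≤ d1 z z' * r) :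
    ∃ zs : ℝ × ℝ, solP Lam μ p η zs ω = zs := by
  obtain ⟨a,b,c,d,e,f,h⟩ := solP_affine hm hq he ω
  have h10 : |a| + |d| ≤ r := by
    have := hcon (1,0) (0,0)
    rw [h _, h _] at this
    simp only [d1] at this
    norm_num at this
    convert this using 2 <;> ring_nf
  have h01 : |b| + |e| ≤ r := by
    have := hcon (0,1) (0,0)
    rw [h _, h _] at this
    simp only [d1] at this
    norm_num at this
    convert this using 2 <;> ring_nf
  have habsa : |a| ≤ r := le_trans (le_add_of_nonneg_right (abs_nonneg d)) h10
  have habse : |e| ≤ r := le_trans (le_add_of_nonneg_left (abs_nonneg b)) h01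
  have hΔ : 0 < (1-a)*(1-e) - b*d := by
    have s1 : b*d ≤ |b| * |d| := by rw [← abs_mul]; exact le_abs_self _
    have s2 : |b| * |d| ≤ (r - |e|)*(r - |a|) :=
      mul_le_mul (by linarith) (by linarith) (abs_nonneg d) (by linarith [abs_nonneg e])
    have s3 : (1-|a|) * (1-|e|) ≤ (1-a)*(1-e) :=
      mul_le_mul (by linarith [le_abs_self a]) (by linarith [le_abs_self e])
        (by linarith) (by linarith [le_abs_self a])
    have hpos : 0 < (1-r)*(1+r-|a|-|e|) := mul_pos (by linarith) (by linarith)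
    have hid : (1-|a|) * (1-|e|) - (r-|e|)*(r-|a|) = (1-r)*(1+r-|a|-|e|) := by ring
    linarith
  refine ⟨(((1-e)*c + b*f)/((1-a)*(1-e) - b*d), ((1-a)*f + d*c)/((1-a)*(1-e) - b*d)), ?_⟩
  rw [h]
  have hΔ' := hΔ.ne'
  generalize hG : (1-a)*(1-e) - b*d = D at hΔ' ⊢
  refine Prod.ext ?_ ?_ <;> · dsimp only; field_simp; subst hG; ring

end

end S19

open S19 in
theorem statement19 (Lam μ p η : ℕ → ℝ)
    (hLam : BddNonneg Lam) (hμ : BddNonneg μ) (hp : BddNonneg p) (hη : BddNonneg η)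
    (ω : ℕ) (hω : 0 < ω)
    (hper : ∀ n : ℕ, Lam (n+ω) = Lam n ∧ μ (n+ω) = μ n ∧ p (n+ω) = p n ∧ η (n+ω) = η n)
    (ωμ : ℕ)
    (h3 : Filter.limsup
      (fun n => ∏ k ∈ Finset.Icc n (n + ωμ), (1 + μ k)⁻¹) Filter.atTop < 1)
    (ωΛ : ℕ)
    (h4Λ : 0 < Filter.liminf
      (fun n => ∑ k ∈ Finset.Icc (n+1) (n+ωΛ), Lam k) Filter.atTop)
    (ωp : ℕ)
    (h4p : 0 < Filter.liminf
      (fun n => ∑ k ∈ Finset.Icc (n+1) (n+ωp), p k) Filter.atTop) :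
    ∃ xs ys : ℕ → ℝ,
      AuxSys Lam μ p η xs ys ∧
      (∀ n, 0 < xs n ∧ 0 < ys n) ∧
      (∀ n, xs (n+ω) = xs n ∧ ys (n+ω) = ys n) ∧
      (∀ xs' ys' : ℕ → ℝ, AuxSys Lam μ p η xs' ys' →
        (∀ n, 0 < xs' n ∧ 0 < ys' n) →
        (∀ n, xs' (n+ω) = xs' n ∧ ys' (n+ω) = ys' n) →
        xs' = xs ∧ ys' = ys) ∧
      (∀ x y : ℕ → ℝ, AuxSys Lam μ p η x y → 0 ≤ x 0 → 0 ≤ y 0 →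
        Filter.Tendsto (fun n => x n - xs n) Filter.atTop (nhds 0) ∧
        Filter.Tendsto (fun n => y n - ys n) Filter.atTop (nhds 0)) := by
  obtain ⟨hL, -⟩ := hLam
  obtain ⟨hm, -⟩ := hμ
  obtain ⟨hq, -⟩ := hp
  obtain ⟨he, -⟩ := hη
  -- iterated periodicity for any periodic sequence
  have key : ∀ (u : ℕ → ℝ), (∀ n, u (n+ω) = u n) → ∀ j n, u (n + j*ω) = u n := by
    intro u hu j
    induction j with
    | zero => intro n; simp
    | succ j ih =>
      intro n
      have h1 : n + (j+1)*ω = (n + j*ω) + ω := by ring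
      rw [h1, hu, ih]
  have step_per : ∀ n, stepP Lam μ p η (n+ω) = stepP Lam μ p η n := by
    intro n
    funext z
    obtain ⟨e1,e2,e3,e4⟩ := hper n
    simp only [stepP, e1, e2, e3, e4]
  have sol_shift : ∀ (z : ℝ × ℝ) n,
      solP Lam μ p η z (n + ω) = solP Lam μ p η (solP Lam μ p η z ω) n := by
    intro z n
    induction n with
    | zero => simp [solP]
    | succ n ih =>
      have h1 : n + 1 + ω = (n + ω) + 1 := by ring
      rw [h1, solP, solP, ih, step_per]
  set r : ℝ := ∏ k ∈ Finset.range ω, (1 + μ k)⁻¹ with hr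
  have hfac0 : ∀ k, (0:ℝ) < (1 + μ k)⁻¹ := fun k => by have := hm k; positivity
  have hfac1 : ∀ k, ((1:ℝ) + μ k)⁻¹ ≤ 1 := fun k => by
    have := hm k
    rw [inv_le_one_iff₀]
    right; linarith
  have hr0 : 0 ≤ r := Finset.prod_nonneg (fun k _ => (hfac0 k).le)
  -- existence of positive parameters from the limsup/liminf hypotheses
  have hμex : ∃ k, 0 < μ k := by
    by_contra hc
    push_neg at hc
    have hz : ∀ k, μ k = 0 := fun k => le_antisymm (hc k) (hm k)
    have h1 : (fun n => ∏ k ∈ Finset.Icc n (n + ωμ), (1 + μ k)⁻¹) = fun _ => (1:ℝ) := by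
      funext n; simp [hz]
    rw [h1, limsup_const] at h3
    exact absurd h3 (lt_irrefl 1)
  have hΛex : ∃ k, 0 < Lam k := by
    by_contra hc
    push_neg at hc
    have hz : ∀ k, Lam k = 0 := fun k => le_antisymm (hc k) (hL k)
    have h1 : (fun n => ∑ k ∈ Finset.Icc (n+1) (n+ωΛ), Lam k) = fun _ => (0:ℝ) := by
      funext n; simp [hz]
    rw [h1, liminf_const] at h4Λ
    exact absurd h4Λ (lt_irrefl 0)
  have hpex : ∃ k, 0 < p k := by
    by_contra hc
    push_neg at hc
    have hz : ∀ k, p k = 0 := fun k => le_antisymm (hc k) (hq k)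
    have h1 : (fun n => ∑ k ∈ Finset.Icc (n+1) (n+ωp), p k) = fun _ => (0:ℝ) := by
      funext n; simp [hz]
    rw [h1, liminf_const] at h4p
    exact absurd h4p (lt_irrefl 0)
  -- r < 1
  have hr1 : r < 1 := by
    obtain ⟨k, hk⟩ := hμex
    have hμk' : 0 < μ (k % ω) := by
      have h1 := key μ (fun n => (hper n).2.1) (k / ω) (k % ω)
      rw [Nat.mod_add_div'] at h1
      rwa [h1] at hk
    have hmem : k % ω ∈ Finset.range ω := Finset.mem_range.mpr (Nat.mod_lt k hω)
    rw [hr, ← Finset.mul_prod_erase _ _ hmem]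
    have hrest1 : (∏ i ∈ (Finset.range ω).erase (k % ω), (1 + μ i)⁻¹) ≤ 1 :=
      Finset.prod_le_one (fun i _ => (hfac0 i).le) (fun i _ => hfac1 i)
    have hk1 : (1 + μ (k % ω))⁻¹ < 1 := by
      rw [inv_lt_one_iff₀]
      right; linarith
    calc (1 + μ (k % ω))⁻¹ * ∏ i ∈ (Finset.range ω).erase (k % ω), (1 + μ i)⁻¹
        ≤ (1 + μ (k % ω))⁻¹ * 1 := by
          gcongr
      _ < 1 := by rw [mul_one]; exact hk1
  -- product over j periods
  have prodper : ∀ j, ∏ k ∈ Finset.range (j*ω), (1 + μ k)⁻¹ = r^j := by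
    intro j
    induction j with
    | zero => simp
    | succ j ih =>
      have h1 : (j+1)*ω = j*ω + ω := by ring
      rw [h1, Finset.prod_range_add, ih, pow_succ]
      congr 1
      refine Finset.prod_congr rfl (fun i _ => ?_)
      rw [show j*ω + i = i + j*ω by ring, key μ (fun n => (hper n).2.1)]
  have hconω : ∀ z z' : ℝ × ℝ,
      d1 (solP Lam μ p η z ω) (solP Lam μ p η z' ω) ≤ d1 z z' * r := by
    intro z z'
    have := sol_contract (Lam := Lam) hm hq he z z' ω
    rwa [← hr] at this
  obtain ⟨zs, hzs⟩ := exists_fixed hm hq he ω r hr0 hr1 hconω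
  have hperiod : ∀ n, solP Lam μ p η zs (n+ω) = solP Lam μ p η zs n := fun n => by
    rw [sol_shift, hzs]
  have hiter : ∀ j, solP Lam μ p η zs (j*ω) = zs := by
    intro j
    induction j with
    | zero => norm_num [solP]
    | succ j ih =>
      have h1 : (j+1)*ω = j*ω + ω := by ring
      rw [h1, sol_shift, hzs, ih]
  -- nonnegativity of the fixed point
  have hgeoC : ∀ C : ℝ, Filter.Tendsto (fun j : ℕ => C * r^j) Filter.atTop (nhds 0) := by
    intro C
    simpa using (tendsto_pow_atTop_nhds_zero_of_lt_one hr0 hr1).const_mul C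
  have znn : 0 ≤ zs.1 ∧ 0 ≤ zs.2 := by
    have hsol0 := sol_nonneg hm hq he hL (z := ((0:ℝ),(0:ℝ))) le_rfl le_rfl
    have hb : ∀ j : ℕ, d1 zs (solP Lam μ p η (0,0) (j*ω)) ≤ d1 zs (0,0) * r^j := by
      intro j
      have h1 := sol_contract (Lam := Lam) hm hq he zs (0,0) (j*ω)
      rw [prodper j, hiter j] at h1
      exact h1
    constructor
    · have hle : -zs.1 ≤ 0 := by
        refine ge_of_tendsto' (hgeoC (d1 zs (0,0))) (fun j => ?_)
        have h1 := hb j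
        have h2 : |zs.1 - (solP Lam μ p η (0,0) (j*ω)).1| ≤ d1 zs (solP Lam μ p η (0,0) (j*ω)) :=
          le_add_of_nonneg_right (abs_nonneg _)
        have h3 := (hsol0 (j*ω)).1
        have h4 := neg_abs_le (zs.1 - (solP Lam μ p η (0,0) (j*ω)).1)
        linarith
      linarith
    · have hle : -zs.2 ≤ 0 := by
        refine ge_of_tendsto' (hgeoC (d1 zs (0,0))) (fun j => ?_)
        have h1 := hb j
        have h2 : |zs.2 - (solP Lam μ p η (0,0) (j*ω)).2| ≤ d1 zs (solP Lam μ p η (0,0) (j*ω)) :=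
          le_add_of_nonneg_left (abs_nonneg _)
        have h3 := (hsol0 (j*ω)).2
        have h4 := neg_abs_le (zs.2 - (solP Lam μ p η (0,0) (j*ω)).2)
        linarith
      linarith
  have hsnn := sol_nonneg hm hq he hL znn.1 znn.2
  -- strict positivity of first component
  obtain ⟨k0, hk0⟩ := hΛex
  have hxaux : ∀ m, 0 < (solP Lam μ p η zs (k0+1+m)).1 := by
    intro m
    induction m with
    | zero =>
      have hx := hsnn k0
      have hB : (0:ℝ) < 1 + μ k0 + η k0 := by have := hm k0; have := he k0; linarith
      show 0 < (solP Lam μ p η zs (k0+1)).1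
      rw [solP]
      refine div_pos ?_ (Dpos hm hq he k0)
      have h1 : 0 < (1 + μ k0 + η k0) * (Lam k0 + (solP Lam μ p η zs k0).1) :=
        mul_pos hB (by linarith [hx.1])
      have h2 : 0 ≤ η k0 * (solP Lam μ p η zs k0).2 := mul_nonneg (he k0) hx.2
      linarith
    | succ m ih =>
      have hx := hsnn (k0+1+m)
      have hB : (0:ℝ) < 1 + μ (k0+1+m) + η (k0+1+m) := by
        have := hm (k0+1+m); have := he (k0+1+m); linarith
      have h1 : k0+1+(m+1) = (k0+1+m)+1 := rfl
      rw [h1, solP]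
      refine div_pos ?_ (Dpos hm hq he (k0+1+m))
      have h2 : 0 < (1 + μ (k0+1+m) + η (k0+1+m)) * (Lam (k0+1+m) + (solP Lam μ p η zs (k0+1+m)).1) :=
        mul_pos hB (by linarith [hL (k0+1+m)])
      have h3 : 0 ≤ η (k0+1+m) * (solP Lam μ p η zs (k0+1+m)).2 := mul_nonneg (he _) hx.2
      linarith
  have hxpos : ∀ n, 0 < (solP Lam μ p η zs n).1 := by
    intro n
    have hle : k0+1 ≤ (k0+1)*ω := Nat.le_mul_of_pos_right _ hω
    have h1 : n + (k0+1)*ω = k0+1+ (n + (k0+1)*ω - (k0+1)) := by omega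
    have h2 := key (fun n => (solP Lam μ p η zs n).1)
      (fun n' => congrArg Prod.fst (hperiod n')) (k0+1) n
    have h2' : (solP Lam μ p η zs (n + (k0+1)*ω)).1 = (solP Lam μ p η zs n).1 := h2
    rw [← h2', h1]
    exact hxaux _
  -- strict positivity of second component
  obtain ⟨k1, hk1⟩ := hpex
  have hyaux : ∀ m, 0 < (solP Lam μ p η zs (k1+1+m)).2 := by
    intro m
    induction m with
    | zero =>
      have hx := hsnn k1
      have hA : (0:ℝ) < 1 + μ k1 + p k1 := by have := hm k1; have := hq k1; linarith
      show 0 < (solP Lam μ p η zs (k1+1)).2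
      rw [solP]
      refine div_pos ?_ (Dpos hm hq he k1)
      have h1 : 0 < p k1 * (Lam k1 + (solP Lam μ p η zs k1).1) :=
        mul_pos hk1 (by linarith [hL k1, hxpos k1])
      have h2 : 0 ≤ (1 + μ k1 + p k1) * (solP Lam μ p η zs k1).2 := mul_nonneg hA.le hx.2
      linarith
    | succ m ih =>
      have hx := hsnn (k1+1+m)
      have hA : (0:ℝ) < 1 + μ (k1+1+m) + p (k1+1+m) := by
        have := hm (k1+1+m); have := hq (k1+1+m); linarith
      have h1 : k1+1+(m+1) = (k1+1+m)+1 := rfl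
      rw [h1, solP]
      refine div_pos ?_ (Dpos hm hq he (k1+1+m))
      have h2 : 0 ≤ p (k1+1+m) * (Lam (k1+1+m) + (solP Lam μ p η zs (k1+1+m)).1) :=
        mul_nonneg (hq _) (by linarith [hL (k1+1+m), hx.1])
      have h3 : 0 < (1 + μ (k1+1+m) + p (k1+1+m)) * (solP Lam μ p η zs (k1+1+m)).2 :=
        mul_pos hA ih
      linarith
  have hypos : ∀ n, 0 < (solP Lam μ p η zs n).2 := by
    intro n
    have hle : k1+1 ≤ (k1+1)*ω := Nat.le_mul_of_pos_right _ hω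
    have h1 : n + (k1+1)*ω = k1+1+ (n + (k1+1)*ω - (k1+1)) := by omega
    have h2 := key (fun n => (solP Lam μ p η zs n).2)
      (fun n' => congrArg Prod.snd (hperiod n')) (k1+1) n
    have h2' : (solP Lam μ p η zs (n + (k1+1)*ω)).2 = (solP Lam μ p η zs n).2 := h2
    rw [← h2', h1]
    exact hyaux _
  -- assemble
  refine ⟨fun n => (solP Lam μ p η zs n).1, fun n => (solP Lam μ p η zs n).2,
    sol_aux hm hq he zs, fun n => ⟨hxpos n, hypos n⟩,
    fun n => ⟨congrArg Prod.fst (hperiod n), congrArg Prod.snd (hperiod n)⟩, ?_, ?_⟩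
  · -- uniqueness
    intro xs' ys' haux hpos' hper'
    have hsol' := aux_eq_sol hm hq he haux
    have hfix' : solP Lam μ p η (xs' 0, ys' 0) ω = (xs' 0, ys' 0) := by
      have h1 := hsol' ω
      have h2 : xs' ω = xs' 0 := by have := (hper' 0).1; rwa [zero_add] at this
      have h3 : ys' ω = ys' 0 := by have := (hper' 0).2; rwa [zero_add] at this
      rw [← h1, h2, h3]
    have hd0 : d1 (xs' 0, ys' 0) zs ≤ 0 := by
      have h1 := hconω (xs' 0, ys' 0) zs
      rw [hfix', hzs] at h1
      nlinarith [d1_nonneg (xs' 0, ys' 0) zs]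
    have hw0 : ((xs' 0, ys' 0) : ℝ × ℝ) = zs := d1_eq_zero hd0
    constructor <;> funext n
    · have h1 := hsol' n
      rw [hw0] at h1
      exact congrArg Prod.fst h1
    · have h1 := hsol' n
      rw [hw0] at h1
      exact congrArg Prod.snd h1
  · -- global attractivity
    intro x y haux hx0 hy0
    have hsol' := aux_eq_sol hm hq he haux
    set δ : ℕ → ℝ := fun n => d1 (solP Lam μ p η (x 0, y 0) n) (solP Lam μ p η zs n) with hδ
    have hδnn : ∀ n, 0 ≤ δ n := fun n => d1_nonneg _ _
    have hanti : Antitone δ := by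
      refine antitone_nat_of_succ_le (fun n => ?_)
      have hμn := hm n
      calc δ (n+1) ≤ δ n / (1 + μ n) := by
            show d1 (solP Lam μ p η (x 0, y 0) (n+1)) (solP Lam μ p η zs (n+1)) ≤ _
            rw [solP, solP]; exact step_contract hm hq he n _ _
        _ ≤ δ n := div_le_self (hδnn n) (by linarith)
    have hbound : ∀ j, δ (j*ω) ≤ δ 0 * r^j := by
      intro j
      have h1 := sol_contract (Lam := Lam) hm hq he (x 0, y 0) zs (j*ω)
      rw [prodper j] at h1
      exact h1
    have hδ0 : Filter.Tendsto δ Filter.atTop (nhds 0) := by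
      rw [Metric.tendsto_atTop]
      intro ε hε
      obtain ⟨j, hj⟩ := ((hgeoC (δ 0)).eventually (gt_mem_nhds hε)).exists
      refine ⟨j*ω, fun n hn => ?_⟩
      rw [Real.dist_eq, sub_zero, abs_of_nonneg (hδnn n)]
      calc δ n ≤ δ (j*ω) := hanti hn
        _ ≤ δ 0 * r^j := hbound j
        _ < ε := hj
    constructor
    · refine squeeze_zero_norm (fun n => ?_) hδ0
      have h1 := hsol' n
      have hx : x n = (solP Lam μ p η (x 0, y 0) n).1 := congrArg Prod.fst h1
      rw [Real.norm_eq_abs, hx]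
      exact le_add_of_nonneg_right (abs_nonneg _)
    · refine squeeze_zero_norm (fun n => ?_) hδ0
      have h1 := hsol' n
      have hy : y n = (solP Lam μ p η (x 0, y 0) n).2 := congrArg Prod.snd h1
      rw [Real.norm_eq_abs, hy]
      exact le_add_of_nonneg_left (abs_nonneg _)
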